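/- If real numbers h₂,…,h_{n-1},hₙ are all negative with h₂ < -1/2 and hₙ < -1/2, and h₁ := -(h₃+⋯+h_{n-1})/2 (so 0 < h₁), and additionally h₁ < 1/2, then (∑ᵢ hᵢ)² - ∑ᵢ hᵢ² > 1/2, where the sums run over i = 1,…,n with h₁ defined as above. -/

import Mathlib

/-- Key inequality in the proof that all late-time Hubble rates cannot be negative:
under the stated sign conditions, `(tr h)² - tr(h²) > 1/2`. -/
theorem stmt_2 (n : ℕ) (hn : 3 ≤ n) (h : ℕ → ℝ)
    (hneg : ∀ i, 2 ≤ i → i ≤ n → h i < 0)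
    (h2 : h 2 < -(1 / 2)) (hnn : h n < -(1 / 2))
    (hdef : h 1 = -(∑ i ∈ Finset.Icc 3 (n - 1), h i) / 2)
    (h1pos : 0 < h 1) (h1lt : h 1 < 1 / 2) :
    1 / 2 < (∑ i ∈ Finset.Icc 1 n, h i) ^ 2 - ∑ i ∈ Finset.Icc 1 n, (h i) ^ 2 := by
  -- n ≥ 4, else h 1 = 0
  rcases Nat.lt_or_ge n 4 with h4 | h4
  · obtain rfl : n = 3 := by omega
    norm_num [show (3:ℕ) - 1 = 2 from rfl] at hdef
    rw [hdef] at h1pos; norm_num at h1pos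
  · obtain ⟨m, rfl⟩ : ∃ m, n = m + 1 := ⟨n - 1, by omega⟩
    have hm : 3 ≤ m := by omega
    simp only [Nat.add_sub_cancel] at hdef
    have hIcc : Finset.Icc 1 m = insert 1 (insert 2 (Finset.Icc 3 m)) := by
      ext i; simp [Finset.mem_Icc]; omega
    have split : ∀ f : ℕ → ℝ, ∑ i ∈ Finset.Icc 1 (m + 1), f i
        = f 1 + f 2 + (∑ i ∈ Finset.Icc 3 m, f i) + f (m + 1) := by
      intro f
      rw [Finset.sum_Icc_succ_top (by omega), hIcc,
        Finset.sum_insert (by simp), Finset.sum_insert (by simp)]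
      ring
    rw [split, split]
    -- abbreviations
    set S := ∑ i ∈ Finset.Icc 3 m, h i with hS
    have hSval : S = -2 * h 1 := by rw [hdef]; ring
    have hsq : ∑ i ∈ Finset.Icc 3 m, (h i) ^ 2 ≤ S ^ 2 := by
      have := Finset.sum_sq_le_sq_sum_of_nonneg
        (s := Finset.Icc 3 m) (f := fun i => -h i)
        (fun i hi => by
          simp only [Finset.mem_Icc] at hi
          have := hneg i (by omega) (by omega)
          show 0 ≤ -h i
          linarith)
      simpa [Finset.sum_neg_distrib] using this
    have key : S ^ 2 = 4 * (h 1) ^ 2 := by rw [hSval]; ring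
    have hmn : h (m + 1) < -(1/2) := hnn
    have h2' : h 2 < 0 := hneg 2 le_rfl (by omega)
    have hmn' : h (m + 1) < 0 := hneg (m + 1) (by omega) le_rfl
    have prod : 1/4 < h 2 * h (m + 1) := by nlinarith
    nlinarith [sq_nonneg (h 1), h1pos, h1lt]
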